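/- Let H be a complex Hilbert space and A ∈ B(H) satisfying A*A² = A*AA*. Then A is self-adjoint. -/

import Mathlib

open ContinuousLinearMap Complex

variable {H : Type*} [NormedAddCommGroup H] [InnerProductSpace ℂ H] [CompleteSpace H]

private lemma adjoint_mul' (S T : H →L[ℂ] H) :
    adjoint (S * T) = adjoint T * adjoint S := by
  rw [← star_eq_adjoint, ← star_eq_adjoint, ← star_eq_adjoint, star_mul]

private lemma key (T : H →L[ℂ] H) (h : adjoint T * T = 0) : T = 0 := by
  ext x
  have h0 : adjoint T (T x) = 0 := by
    have := congrFun (congrArg DFunLike.coe h) x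
    simpa [mul_apply] using this
  have h1 : (inner ℂ (T x) (T x) : ℂ) = 0 := by
    rw [← adjoint_inner_left, h0, inner_zero_left]
  simpa using inner_self_eq_zero.mp h1

theorem stmt11 (A : H →L[ℂ] H) (h : adjoint A * A * A = adjoint A * A * adjoint A) :
    IsSelfAdjoint A := by
  set C : H →L[ℂ] H := A - adjoint A with hCdef
  have hC : adjoint A * A * C = 0 := by
    rw [hCdef, mul_sub, h, sub_self]
  have hAC : A * C = 0 := by
    apply key
    have : adjoint (A * C) * (A * C) = adjoint C * (adjoint A * A * C) := by
      rw [adjoint_mul', mul_assoc, mul_assoc]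
    rw [this, hC, mul_zero]
  -- adjoint of hAC : adjoint C * adjoint A = 0
  have hCA : adjoint C * adjoint A = 0 := by
    have := congrArg adjoint hAC
    rw [adjoint_mul'] at this
    simpa [← star_eq_adjoint] using this
  have hadjC : adjoint C = adjoint A - A := by
    rw [hCdef, ← star_eq_adjoint, ← star_eq_adjoint, star_sub, star_star, star_eq_adjoint]
  -- A² = A A* and A*² = A A*
  have hA2 : A * A = A * adjoint A := by
    have := hAC
    rw [hCdef, mul_sub, sub_eq_zero] at this
    exact this
  have hA3 : adjoint A * adjoint A = A * adjoint A := by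
    have := hCA
    rw [hadjC, sub_mul, sub_eq_zero] at this
    exact this
  -- C*C = A*A - A A*
  have hD : adjoint C * C = adjoint A * A - A * adjoint A := by
    rw [hadjC, hCdef]
    rw [sub_mul, mul_sub, mul_sub, hA2, hA3]
    abel
  -- pointwise: ‖C y‖² = ‖A y‖² - ‖A* y‖²
  have hnorm : ∀ y : H, (‖C y‖ : ℝ)^2 = ‖A y‖^2 - ‖adjoint A y‖^2 := by
    intro y
    have e1 : (inner ℂ ((adjoint C * C) y) y : ℂ) = inner ℂ (C y) (C y) := by
      rw [ContinuousLinearMap.mul_apply, adjoint_inner_left]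
    have e2 : (inner ℂ ((adjoint C * C) y) y : ℂ)
        = inner ℂ (A y) (A y) - inner ℂ (adjoint A y) (adjoint A y) := by
      rw [hD]
      simp only [sub_apply, inner_sub_left, ContinuousLinearMap.mul_apply]
      rw [adjoint_inner_left]
      congr 1
      nth_rewrite 1 [← adjoint_adjoint A]
      rw [adjoint_inner_left]
    have := e1.symm.trans e2
    rw [inner_self_eq_norm_sq_to_K, inner_self_eq_norm_sq_to_K, inner_self_eq_norm_sq_to_K] at this
    exact_mod_cast this
  -- A* C = 0
  have hA4 : adjoint A * C = 0 := by
    ext x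
    have hACx : A (C x) = 0 := by
      have := congrFun (congrArg DFunLike.coe hAC) x
      simpa [mul_apply] using this
    have h5 := hnorm (C x)
    rw [hACx] at h5
    simp only [norm_zero] at h5
    have hle : ‖adjoint A (C x)‖^2 ≤ 0 := by
      have := sq_nonneg ‖C (C x)‖
      linarith
    have h7 : ‖adjoint A (C x)‖^2 = 0 := le_antisymm hle (sq_nonneg _)
    have : ‖adjoint A (C x)‖ = 0 := by
      exact pow_eq_zero_iff (n := 2) (by norm_num) |>.mp h7
    simpa [mul_apply] using norm_eq_zero.mp this
  -- now A*A = A*² = A A*, so C*C = 0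
  have hA5 : adjoint A * A = A * adjoint A := by
    have := hA4
    rw [hCdef, mul_sub, sub_eq_zero] at this
    rw [this, hA3]
  have hCC : adjoint C * C = 0 := by rw [hD, hA5, sub_self]
  have hC0 : C = 0 := key C hCC
  rw [hCdef, sub_eq_zero] at hC0
  rw [isSelfAdjoint_iff']
  exact hC0.symm
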